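/- Assume in addition that k is algebraically closed. Let V₁, …, Vₙ be pairwise non-isomorphic finite-dimensional simple left A-modules. Then the subspaces β_{V_i}(V_i ⊗_k V_i*) ⊆ A* are linearly independent: if x_i ∈ β_{V_i}(V_i ⊗_k V_i*) for each i and x₁ + ⋯ + xₙ = 0 in A*, then x_i = 0 for every i. In particular their sum in A* is direct. -/

import Mathlib

/-!
Matrix coefficients.  `k` is a field, `A` an associative unital `k`-algebra, and `V` a
left `A`-module which is also a `k`-vector space compatibly.  The matrix coefficient map
`β_V : V ⊗[k] V* → A*` is the `k`-linear map determined by `β_V (v ⊗ f) a = f (a • v)`.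
-/

open TensorProduct

/-- The matrix coefficient map `β_V : V ⊗[k] V* → A*`, `β_V (v ⊗ f) a = f (a • v)`. -/
noncomputable def matrixCoeff (k A V : Type*) [Field k] [Ring A] [Algebra k A]
    [AddCommGroup V] [Module k V] [Module A V] [IsScalarTower k A V] :
    V ⊗[k] Module.Dual k V →ₗ[k] Module.Dual k A :=
  TensorProduct.lift
  { toFun := fun v =>
      { toFun := fun f =>
          { toFun := fun a => f (a • v)
            map_add' := fun a b => by simp [add_smul]
            map_smul' := fun c a => by simp [smul_assoc] }
        map_add' := fun f g => rfl
        map_smul' := fun c f => rfl }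
    map_add' := fun v w => by
      ext f a
      simp [smul_add]
    map_smul' := fun c v => by
      ext f a
      show f (a • c • v) = c • f (a • v)
      rw [smul_comm a c v, map_smul] }

/-- A finite product of semisimple modules is semisimple. -/
theorem piSemisimpleAux {R ι : Type*} [Ring R] [Finite ι] (M : ι → Type*)
    [∀ i, AddCommGroup (M i)] [∀ i, Module R (M i)] [∀ i, IsSemisimpleModule R (M i)] :
    IsSemisimpleModule R (∀ i, M i) := by
  classical
  cases nonempty_fintype ι
  exact isSemisimpleModule_of_isSemisimpleModule_submodule'
    (p := fun i => LinearMap.range (LinearMap.single R M i))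
    (fun i => IsSemisimpleModule.range _)
    (by simp_rw [LinearMap.range_eq_map, Submodule.iSup_map_single, Submodule.pi_top])

/-- Decompose an element of a finite double product into singles. -/
theorem piDoubleAux {n : ℕ} {d : Fin n → ℕ} {V : Fin n → Type*} [∀ i, AddCommGroup (V i)]
    (x : ∀ j, Fin (d j) → V j) :
    x = ∑ j, ∑ s, Pi.single j (Pi.single s (x j s)) := by
  classical
  conv_lhs => rw [← Finset.univ_sum_single x]
  refine Finset.sum_congr rfl fun j _ => ?_
  conv_lhs => rw [← Finset.univ_sum_single (x j)]
  exact map_sum (AddMonoidHom.single (fun j => Fin (d j) → V j) j) _ _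

/-- The action of `a : A` on `V` as a `k`-linear map. -/
def actionMap (k : Type*) {A V : Type*} [Field k] [Ring A] [Algebra k A]
    [AddCommGroup V] [Module k V] [Module A V] [IsScalarTower k A V] (a : A) :
    V →ₗ[k] V where
  toFun v := a • v
  map_add' := smul_add a
  map_smul' c v := by
    show a • c • v = c • a • v
    rw [← algebraMap_smul A c v, ← mul_smul, ← Algebra.commutes, mul_smul, algebraMap_smul]

/-- Density-type lemma: for pairwise non-isomorphic finite-dimensional simple modules, there is
an algebra element acting as the identity on one of them and as zero on all the others. -/
theorem exists_projector (k A : Type*) [Field k] [Ring A]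
    [Algebra k A] (n : ℕ) (V : Fin n → Type*)
    [∀ i, AddCommGroup (V i)] [∀ i, Module k (V i)] [∀ i, Module A (V i)]
    [∀ i, IsScalarTower k A (V i)] [∀ i, FiniteDimensional k (V i)]
    [∀ i, IsSimpleModule A (V i)]
    (hiso : ∀ i j, i ≠ j → IsEmpty (V i ≃ₗ[A] V j)) (i : Fin n) :
    ∃ a : A, (∀ v : V i, a • v = v) ∧ ∀ j, j ≠ i → ∀ w : V j, a • w = 0 := by
  classical
  have schur : ∀ (j l : Fin n), j ≠ l → ∀ (g : V j →ₗ[A] V l), g = 0 := by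
    intro j l hjl g
    by_contra hg
    exact (hiso j l hjl).false (LinearEquiv.ofBijective g (g.bijective_of_ne_zero hg))
  set d : Fin n → ℕ := fun j => Module.finrank k (V j) with hd
  set b : ∀ j, Module.Basis (Fin (d j)) k (V j) := fun j => Module.finBasis k (V j) with hb
  haveI : ∀ j, IsSemisimpleModule A (Fin (d j) → V j) := fun j =>
    piSemisimpleAux (fun _ => V j)
  haveI : IsSemisimpleModule A (∀ j, Fin (d j) → V j) := piSemisimpleAux _
  set Φ : A →ₗ[A] ∀ j, Fin (d j) → V j :=
    LinearMap.pi fun j => LinearMap.pi fun t => LinearMap.toSpanSingleton A (V j) (b j t) with hΦ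
  set T := LinearMap.range Φ with hT
  obtain ⟨C, hC⟩ := exists_isCompl T
  set pr : (∀ j, Fin (d j) → V j) →ₗ[A] ∀ j, Fin (d j) → V j :=
    T.subtype ∘ₗ (T.linearProjOfIsCompl C hC) with hpr
  have hprT : ∀ x ∈ T, pr x = x := by
    intro x hx
    have h := Submodule.linearProjOfIsCompl_apply_left hC ⟨x, hx⟩
    exact congrArg Subtype.val h
  have hprmem : ∀ x, pr x ∈ T := fun x => (T.linearProjOfIsCompl C hC x).2
  -- key: pr maps singles at coordinate j to things supported at coordinate j (Schur's lemma)
  have key : ∀ (j l : Fin n), j ≠ l → ∀ (t : Fin (d j)) (s : Fin (d l)) (v : V j),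
      pr (Pi.single j (Pi.single t v)) l s = 0 := by
    intro j l hjl t s v
    have h0 := schur j l hjl
      ((LinearMap.proj s) ∘ₗ (LinearMap.proj l) ∘ₗ pr ∘ₗ
        (LinearMap.single A (fun j => Fin (d j) → V j) j) ∘ₗ
        (LinearMap.single A (fun _ : Fin (d j) => V j) t))
    have h1 := congrFun (congrArg (fun (g : V j →ₗ[A] V l) => (g : V j → V l)) h0) v
    simpa using h1
  have comp : ∀ (x : ∀ j, Fin (d j) → V j) (l : Fin n) (s : Fin (d l)),
      pr x l s = ∑ j, ∑ t, pr (Pi.single j (Pi.single t (x j t))) l s := by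
    intro x l s
    conv_lhs => rw [piDoubleAux x]
    simp only [map_sum, Finset.sum_apply]
  set z : ∀ j, Fin (d j) → V j := Pi.single i (fun t => b i t) with hz
  have hzi : ∀ t, z i t = b i t := fun t => by rw [hz, Pi.single_eq_same]
  have hzoff : ∀ j, j ≠ i → z j = 0 := fun j hj => by rw [hz, Pi.single_eq_of_ne hj]
  have hprz_off : ∀ l, l ≠ i → ∀ s, pr z l s = 0 := by
    intro l hl s
    rw [comp]
    refine Finset.sum_eq_zero fun j _ => Finset.sum_eq_zero fun t _ => ?_
    by_cases hj : j = i
    · subst hj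
      exact key j l (fun h => hl h.symm) t s _
    · rw [hzoff j hj]
      simp
  set w : ∀ j, Fin (d j) → V j := Φ 1 with hw
  have hwmem : w ∈ T := ⟨1, rfl⟩
  have hwval : ∀ j t, w j t = b j t := by
    intro j t
    show (1 : A) • (b j t : V j) = b j t
    exact one_smul _ _
  set y : (∀ j, Fin (d j) → V j) := w - z with hy
  have hyi : ∀ t, y i t = 0 := by
    intro t
    show w i t - z i t = 0
    rw [hwval, hzi]
    exact sub_self _
  have hpry_i : ∀ t', pr y i t' = 0 := by
    intro t'
    rw [comp]
    refine Finset.sum_eq_zero fun j _ => Finset.sum_eq_zero fun t _ => ?_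
    by_cases hj : j = i
    · subst hj
      rw [hyi]
      simp
    · exact key j i hj t t' _
  have hprw : pr w = w := hprT w hwmem
  have hprzw : pr z = z := by
    have hsplit : pr z + pr y = w := by
      rw [← map_add, hy, add_sub_cancel]
      exact hprw
    funext l s
    have hls : pr z l s + pr y l s = w l s := by
      have := congrFun (congrFun hsplit l) s
      simpa using this
    by_cases hl : l = i
    · subst hl
      rw [hpry_i, add_zero] at hls
      rw [hls, hwval, hzi]
    · rw [hprz_off l hl, hzoff l hl]
      rfl
  have hzT : z ∈ T := hprzw ▸ hprmem z
  obtain ⟨a, ha⟩ := hzT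
  have haval : ∀ j t, a • (b j t : V j) = z j t := by
    intro j t
    exact congrFun (congrFun ha j) t
  refine ⟨a, ?_, ?_⟩
  · have h1 : actionMap k (V := V i) a = LinearMap.id := by
      apply (b i).ext
      intro t
      show a • (b i t : V i) = b i t
      rw [haval, hzi]
    intro v
    exact congrFun (congrArg (fun (g : V i →ₗ[k] V i) => (g : V i → V i)) h1) v
  · intro j hj w'
    have h0 : actionMap k (V := V j) a = 0 := by
      apply (b j).ext
      intro t
      show a • (b j t : V j) = 0
      rw [haval, hzoff j hj]
      rfl
    exact congrFun (congrArg (fun (g : V j →ₗ[k] V j) => (g : V j → V j)) h0) w'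

/-- over an algebraically closed field, the subspaces of matrix coefficients of
pairwise non-isomorphic finite-dimensional simple modules are linearly independent in `A*`. -/
theorem matrixCoeff_ranges_independent (k A : Type*) [Field k] [IsAlgClosed k] [Ring A]
    [Algebra k A] (n : ℕ) (V : Fin n → Type*)
    [∀ i, AddCommGroup (V i)] [∀ i, Module k (V i)] [∀ i, Module A (V i)]
    [∀ i, IsScalarTower k A (V i)] [∀ i, FiniteDimensional k (V i)]
    [∀ i, IsSimpleModule A (V i)]
    (hiso : ∀ i j, i ≠ j → IsEmpty (V i ≃ₗ[A] V j))
    (x : Fin n → Module.Dual k A)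
    (hx : ∀ i, x i ∈ LinearMap.range (matrixCoeff k A (V i)))
    (hsum : ∑ i, x i = 0) :
    ∀ i, x i = 0 := by
  intro i
  obtain ⟨a, ha1, ha0⟩ := exists_projector k A n V hiso i
  have h1 : ∀ (t : (V i) ⊗[k] Module.Dual k (V i)) (c : A),
      matrixCoeff k A (V i) t (a * c) = matrixCoeff k A (V i) t c := by
    intro t c
    induction t with
    | zero => simp
    | tmul v f =>
      show f ((a * c) • v) = f (c • v)
      rw [mul_smul, ha1]
    | add u v hu hv =>
      rw [map_add, LinearMap.add_apply, LinearMap.add_apply, hu, hv]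
  have h0 : ∀ j, j ≠ i → ∀ (t : (V j) ⊗[k] Module.Dual k (V j)) (c : A),
      matrixCoeff k A (V j) t (a * c) = 0 := by
    intro j hj t c
    induction t with
    | zero => simp
    | tmul v f =>
      show f ((a * c) • v) = 0
      rw [mul_smul, ha0 j hj, map_zero]
    | add u v hu hv =>
      rw [map_add, LinearMap.add_apply, hu, hv, add_zero]
  ext c
  have hs : ∑ j, x j (a * c) = 0 := by
    rw [← LinearMap.sum_apply, hsum, LinearMap.zero_apply]
  have hterm : ∀ j, j ≠ i → x j (a * c) = 0 := by
    intro j hj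
    obtain ⟨t, ht⟩ := hx j
    rw [← ht]
    exact h0 j hj t c
  rw [Finset.sum_eq_single i (fun j _ hj => hterm j hj) (by simp)] at hs
  obtain ⟨t, ht⟩ := hx i
  have : x i c = x i (a * c) := by rw [← ht, h1]
  rw [this, hs]
  rfl
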